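/- Recovering the simplex point from all one-vs-rest logits: let q ≥ 2, and suppose λ₁*, …, λ_{q-1}* ∈ ℝ are given. Define β = Σ_{k=1}^{q-1} e^{λ_k*}/(1+e^{λ_k*}) and assume β < 1. Set s = β/(1-β) and x_k = e^{λ_k*}(s+1)/(1+e^{λ_k*}) for k = 1,…,q-1, x_q = 1. Then for each k, x_k / (Σ_{j≠k} x_j) = e^{λ_k*}, i.e., the constructed positive weights reproduce the prescribed one-vs-rest odds. -/

import Mathlib

open Real Finset

theorem recover_weights_from_logits (n : ℕ) (hn : 1 ≤ n) (lam : Fin n → ℝ)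
    (β : ℝ) (hβdef : β = ∑ k : Fin n, Real.exp (lam k) / (1 + Real.exp (lam k)))
    (hβ : β < 1)
    (s : ℝ) (hs : s = β / (1 - β))
    (x : Fin (n + 1) → ℝ)
    (hx : ∀ k : Fin n,
      x k.castSucc = Real.exp (lam k) * (s + 1) / (1 + Real.exp (lam k)))
    (hxq : x (Fin.last n) = 1) :
    ∀ k : Fin n,
      x k.castSucc / (∑ j ∈ Finset.univ.erase k.castSucc, x j) = Real.exp (lam k) := by
  have hden : ∀ k : Fin n, (0:ℝ) < 1 + Real.exp (lam k) := fun k => by positivity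
  have hβ0 : 0 ≤ β := by
    rw [hβdef]
    exact Finset.sum_nonneg fun k _ => le_of_lt (div_pos (Real.exp_pos _) (hden k))
  have h1β : 0 < 1 - β := by linarith
  have hsb : (s + 1) * β = s := by
    rw [hs]; field_simp; ring
  have htot : ∑ j : Fin (n + 1), x j = s + 1 := by
    rw [Fin.sum_univ_castSucc, hxq]
    have : ∑ k : Fin n, x k.castSucc = (s + 1) * β := by
      rw [hβdef, Finset.mul_sum]
      refine Finset.sum_congr rfl fun k _ => ?_
      rw [hx k]; field_simp
    rw [this, hsb]
  intro k
  have herase : ∑ j ∈ Finset.univ.erase k.castSucc, x j = (s + 1) - x k.castSucc := by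
    rw [← htot]
    exact Finset.sum_erase_eq_sub (Finset.mem_univ _)
  have hs1 : 0 < s + 1 := by
    rw [hs]
    have : 0 < β / (1 - β) + 1 := by positivity
    linarith [this]
  rw [herase, hx k]
  have hdk := hden k
  rw [div_eq_iff]
  · field_simp; ring
  · have : (s + 1) - Real.exp (lam k) * (s + 1) / (1 + Real.exp (lam k))
        = (s + 1) / (1 + Real.exp (lam k)) := by field_simp; ring
    rw [this]
    positivity
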